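/- Let (X,d) be a metric space, x ≠ y two points of X, and x₀ ∈ X. Then in Con(X): (i) the Hausdorff distance between the images of the rays γ_x and γ_y is infinite, and (ii) the Hausdorff distance between the images of γ_x and γ_{∞,x₀} is infinite. Hence the map x ↦ [γ_x] from X to the boundary at infinity of Con(X) is well-defined and injective, and no [γ_x] equals the vertical direction [γ_{∞,x₀}]. -/
import Mathlib


/-- The Bonk–Schramm cone distance on `X × (0,∞)`. -/
noncomputable def dCon {X : Type*} [MetricSpace X] (p q : X × ℝ) : ℝ :=
  2 * Real.log ((dist p.1 q.1 + max p.2 q.2) / Real.sqrt (p.2 * q.2))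

/-- Two subsets of `Con(X)` are at Hausdorff distance at most `R` with respect to `d_Con`. -/
def HausCloseCon {X : Type*} [MetricSpace X] (A B : Set (X × ℝ)) (R : ℝ) : Prop :=
  (∀ p ∈ A, ∃ q ∈ B, dCon p q ≤ R) ∧ (∀ q ∈ B, ∃ p ∈ A, dCon p q ≤ R)

private lemma dCon_eq {X : Type*} [MetricSpace X] (a b : X) (u v : ℝ) :
    dCon (a, Real.exp u) (b, Real.exp v)
      = 2 * (Real.log (dist a b + max (Real.exp u) (Real.exp v)) - (u + v) / 2) := by
  have hsqrt : Real.sqrt (Real.exp u * Real.exp v) = Real.exp ((u + v) / 2) := by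
    rw [← Real.exp_add, ← Real.exp_half]
  have hN : 0 < dist a b + max (Real.exp u) (Real.exp v) := by
    have := Real.exp_pos u
    have := dist_nonneg (x := a) (y := b)
    have := le_max_left (Real.exp u) (Real.exp v)
    linarith
  rw [dCon, hsqrt, Real.log_div hN.ne' (Real.exp_pos _).ne', Real.log_exp]

/-- For `x ≠ y` in `X` and any `x₀ ∈ X`: (i) the images of the rays `γ_x` and `γ_y` in
`Con(X)` are at infinite Hausdorff distance, and (ii) the images of `γ_x` and `γ_{∞,x₀}`
are at infinite Hausdorff distance. Hence `x ↦ [γ_x]` is well-defined and injective into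
the boundary at infinity, and no `[γ_x]` equals the vertical direction. -/
theorem stmt_8 {X : Type*} [MetricSpace X] (x y x₀ : X) (hxy : x ≠ y) :
    (∀ R : ℝ, ¬ HausCloseCon ((fun s : ℝ => (x, Real.exp (-s))) '' Set.Ici 0)
        ((fun s : ℝ => (y, Real.exp (-s))) '' Set.Ici 0) R) ∧
    (∀ R : ℝ, ¬ HausCloseCon ((fun s : ℝ => (x, Real.exp (-s))) '' Set.Ici 0)
        ((fun s : ℝ => (x₀, Real.exp s)) '' Set.Ici 0) R) := by
  have hd : 0 < dist x y := dist_pos.2 hxy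
  constructor
  · intro R h
    set s : ℝ := max 0 (R + 1 - 2 * Real.log (dist x y)) with hs
    have hs0 : (0 : ℝ) ≤ s := le_max_left _ _
    obtain ⟨q, hq, hle⟩ := h.1 (x, Real.exp (-s)) ⟨s, hs0, rfl⟩
    obtain ⟨t, ht0, rfl⟩ := hq
    have ht0 : (0 : ℝ) ≤ t := ht0
    have key : 2 * Real.log (dist x y) + s + t ≤ dCon (x, Real.exp (-s)) (y, Real.exp (-t)) := by
      rw [dCon_eq]
      have hlog : Real.log (dist x y) ≤
          Real.log (dist x y + max (Real.exp (-s)) (Real.exp (-t))) := by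
        apply Real.log_le_log hd
        have := le_max_left (Real.exp (-s)) (Real.exp (-t))
        have := Real.exp_pos (-s)
        linarith
      linarith
    have hsge : R + 1 - 2 * Real.log (dist x y) ≤ s := le_max_right _ _
    linarith
  · intro R h
    set s : ℝ := max 0 (R + 1) with hs
    have hs0 : (0 : ℝ) ≤ s := le_max_left _ _
    obtain ⟨q, hq, hle⟩ := h.1 (x, Real.exp (-s)) ⟨s, hs0, rfl⟩
    obtain ⟨t, ht0, rfl⟩ := hq
    have ht0 : (0 : ℝ) ≤ t := ht0
    have key : s + t ≤ dCon (x, Real.exp (-s)) (x₀, Real.exp t) := by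
      rw [dCon_eq]
      have hlog : t ≤ Real.log (dist x x₀ + max (Real.exp (-s)) (Real.exp t)) := by
        calc t = Real.log (Real.exp t) := (Real.log_exp t).symm
          _ ≤ _ := by
            apply Real.log_le_log (Real.exp_pos t)
            have := le_max_right (Real.exp (-s)) (Real.exp t)
            have := dist_nonneg (x := x) (y := x₀)
            linarith
      linarith
    have hsge : R + 1 ≤ s := le_max_right _ _
    linarith
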